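/- Let j, k ∈ Z_L \ {0} with j + k = l, l₁ = 0 (l = (l₁,l₂)), and suppose the resonance condition Ω_j + Ω_k = 0 holds. Then B_{jkl} + B_{kjl} = 0. -/

import Mathlib

noncomputable section

open scoped Real

/-- The physical wavenumber in the dual lattice `Z_L` attached to the integer index `n`. -/
def wn (L₁ L₂ : ℝ) (n : ℤ × ℤ) : ℝ × ℝ :=
  (2 * Real.pi * (n.1 : ℝ) / L₁, 2 * Real.pi * (n.2 : ℝ) / L₂)

/-- `|k|²` for a wavenumber `k ∈ ℝ²`. -/
def ksq (k : ℝ × ℝ) : ℝ := k.1 ^ 2 + k.2 ^ 2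

/-- The wedge product `j ∧ k = j₁k₂ − j₂k₁`. -/
def wedge (j k : ℝ × ℝ) : ℝ := j.1 * k.2 - j.2 * k.1

/-- Squared `Hˢ` norm `‖(−Δ)^{s/2} w‖²_{L²}` of a zero-mean field on the torus
`M = [0,L₁] × [−L₂/2,L₂/2]`, computed from its Fourier coefficients `c` via Parseval. -/
def hsq (L₁ L₂ : ℝ) (s : ℝ) (c : ℤ × ℤ → ℂ) : ℝ :=
  (L₁ * L₂) * ∑' n : ℤ × ℤ, ksq (wn L₁ L₂ n) ^ s * ‖c n‖ ^ 2

/-- The `L²(M)` inner product `(a,b)_{L²} = ∫_M a conj(b)`, via Fourier coefficients. -/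
def ip (L₁ L₂ : ℝ) (a b : ℤ × ℤ → ℂ) : ℂ :=
  ((L₁ * L₂ : ℝ) : ℂ) * ∑' n : ℤ × ℤ, a n * (starRingEnd ℂ) (b n)

/-- Interaction coefficient `(j∧k)/|j|²` of the nonlinearity `B`. -/
def bcoef (L₁ L₂ : ℝ) (j k : ℤ × ℤ) : ℝ :=
  if j = 0 then 0 else wedge (wn L₁ L₂ j) (wn L₁ L₂ k) / ksq (wn L₁ L₂ j)

/-- Fourier coefficients of `B(a,b) := (∇⊥Δ⁻¹a)·∇b` (a convolution). -/
def bconv (L₁ L₂ : ℝ) (a b : ℤ × ℤ → ℂ) (l : ℤ × ℤ) : ℂ :=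
  ∑' p : ℤ × ℤ, ((bcoef L₁ L₂ p (l - p) : ℝ) : ℂ) * a p * b (l - p)

/-- `Ω_k := −k₁/|k|²`, i times the eigenvalue of `L = ∂ₓΔ⁻¹` at wavenumber `k`. -/
def Om (L₁ L₂ : ℝ) (n : ℤ × ℤ) : ℝ := -(wn L₁ L₂ n).1 / ksq (wn L₁ L₂ n)

/-- Rapid decay of Fourier coefficients: the field is smooth on the torus. -/
def regular (L₁ L₂ : ℝ) (c : ℤ × ℤ → ℂ) : Prop :=
  ∀ s : ℝ, Summable fun n : ℤ × ℤ => (1 + ksq (wn L₁ L₂ n)) ^ s * ‖c n‖ ^ 2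

/-- The Fourier coefficients of a real-valued field. -/
def realField (c : ℤ × ℤ → ℂ) : Prop := ∀ n, c (-n) = (starRingEnd ℂ) (c n)

/-- Non-zonal (fast) part: Fourier modes with `k₁ ≠ 0`. -/
def tilde (c : ℤ × ℤ → ℂ) : ℤ × ℤ → ℂ := fun n => if n.1 = 0 then 0 else c n

/-- Zonal (slow) part: Fourier modes with `k₁ = 0`. -/
def zbar (c : ℤ × ℤ → ℂ) : ℤ × ℤ → ℂ := fun n => if n.1 = 0 then c n else 0

/-- The Poincaré constant `c₀` of the torus (the smallest nonzero wavenumber). -/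
def poin (L₁ L₂ : ℝ) : ℝ := min (2 * Real.pi / L₁) (2 * Real.pi / L₂)

/-- The coefficients of `∂ₓ c`. -/
def dx (L₁ L₂ : ℝ) (c : ℤ × ℤ → ℂ) : ℤ × ℤ → ℂ :=
  fun n => Complex.I * (((wn L₁ L₂ n).1 : ℝ) : ℂ) * c n

/-- The coefficients of `∂_y c`. -/
def dy (L₁ L₂ : ℝ) (c : ℤ × ℤ → ℂ) : ℤ × ℤ → ℂ :=
  fun n => Complex.I * (((wn L₁ L₂ n).2 : ℝ) : ℂ) * c n

/-- The coefficients of `Δc`. -/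
def lap (L₁ L₂ : ℝ) (c : ℤ × ℤ → ℂ) : ℤ × ℤ → ℂ :=
  fun n => -((ksq (wn L₁ L₂ n) : ℝ) : ℂ) * c n

/-- The operator `I_Ω`: Fourier multiplier with symbol `1/(iΩ_k) = i|k|²/k₁` on `k₁ ≠ 0`. -/
def iOm (L₁ L₂ : ℝ) (c : ℤ × ℤ → ℂ) : ℤ × ℤ → ℂ := fun n =>
  if n.1 = 0 then 0
  else Complex.I * ((ksq (wn L₁ L₂ n) / (wn L₁ L₂ n).1 : ℝ) : ℂ) * c n

/-- `B_{jkl} = |M| (j∧k)/|j|²` when `j + k = l`, and `0` otherwise. -/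
def bco (L₁ L₂ : ℝ) (nj nk nl : ℤ × ℤ) : ℝ :=
  if nj + nk = nl then L₁ * L₂ * wedge (wn L₁ L₂ nj) (wn L₁ L₂ nk) / ksq (wn L₁ L₂ nj)
  else 0

/-- Dot product on `ℝ²`. -/
def dotR (a b : ℝ × ℝ) : ℝ := a.1 * b.1 + a.2 * b.2

/-- The complex exponential `e^{i k·x}`. -/
def expf (k : ℝ × ℝ) (x : ℝ × ℝ) : ℂ := Complex.exp (Complex.I * ((dotR k x : ℝ) : ℂ))

/-- Directional derivative `∂_v g (x)`. -/
def pd (v : ℝ × ℝ) (g : ℝ × ℝ → ℂ) (x : ℝ × ℝ) : ℂ := fderiv ℝ g x v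

/-- `Δ⁻¹ e^{i j·x} := −e^{i j·x}/|j|²`. -/
def invLapExp (j : ℝ × ℝ) : ℝ × ℝ → ℂ := fun x => -expf j x / ((ksq j : ℝ) : ℂ)

/-- `B(e^{ij·x}, e^{ik·x}) = (∇⊥Δ⁻¹e^{ij·x})·∇e^{ik·x}` pointwise,
with `∇⊥ = (−∂_y, ∂_x)`. -/
def Bpt (j k : ℝ × ℝ) (x : ℝ × ℝ) : ℂ :=
  -pd (0, 1) (invLapExp j) x * pd (1, 0) (expf k) x
    + pd (1, 0) (invLapExp j) x * pd (0, 1) (expf k) x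

/-- The `L^∞(M)` norm of the field with Fourier coefficients `c`. -/
def linf (L₁ L₂ : ℝ) (c : ℤ × ℤ → ℂ) : ℝ :=
  ⨆ x : ℝ × ℝ, ‖∑' n : ℤ × ℤ, c n * Complex.exp (Complex.I * ((dotR (wn L₁ L₂ n) x : ℝ) : ℂ))‖

/-- Euclidean norm of an integer lattice point. -/
def zn (k : ℤ × ℤ) : ℝ := Real.sqrt ((k.1 : ℝ) ^ 2 + (k.2 : ℝ) ^ 2)

/-- A classical solution `ω` (in Fourier representation) of the β-plane vorticity equation
`∂ₜω + B(ω,ω) + (1/ε)Lω + μAω = f` on `M × (0,∞)`: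
smooth, `M`-periodic, real-valued and of zero spatial mean for every `t`,
with `f` smooth, periodic and zero-mean.  Mode by mode the equation reads
`d/dt ω_l = f_l − B(ω,ω)_l − (iΩ_l/ε) ω_l − μ|l|² ω_l`. -/
structure IsSolution (L₁ L₂ μ ε : ℝ) (ω f : ℝ → ℤ × ℤ → ℂ) : Prop where
  mean_ω : ∀ t, ω t 0 = 0
  mean_f : ∀ t, f t 0 = 0
  real_ω : ∀ t, realField (ω t)
  real_f : ∀ t, realField (f t)
  reg_ω : ∀ t, regular L₁ L₂ (ω t)
  reg_f : ∀ t, regular L₁ L₂ (f t)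
  cont_ω : ∀ n, Continuous fun t => ω t n
  eqn : ∀ t, 0 < t → ∀ l : ℤ × ℤ,
    HasDerivAt (fun τ => ω τ l)
      (f t l - bconv L₁ L₂ (ω t) (ω t) l
        - Complex.I * ((Om L₁ L₂ l : ℝ) : ℂ) / ((ε : ℝ) : ℂ) * ω t l
        - ((μ : ℝ) : ℂ) * ((ksq (wn L₁ L₂ l) : ℝ) : ℂ) * ω t l) t


/-- the resonant cancellation of the paper, §3.1.  For nonzero
`j, k ∈ Z_L` with `j + k = l`, `l₁ = 0`, and `Ω_j + Ω_k = 0` (resonance),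
one has `B_{jkl} + B_{kjl} = 0`. -/
theorem statement9 (L₁ L₂ : ℝ) (hL₁ : 0 < L₁) (hL₂ : 0 < L₂)
    (nj nk nl : ℤ × ℤ) (hj : nj ≠ 0) (hk : nk ≠ 0) (hjk : nj + nk = nl)
    (hl1 : (wn L₁ L₂ nl).1 = 0)
    (hres : Om L₁ L₂ nj + Om L₁ L₂ nk = 0) :
    bco L₁ L₂ nj nk nl + bco L₁ L₂ nk nj nl = 0 := by
  have hkj : nk + nj = nl := by rw [add_comm]; exact hjk
  have hpi : (0:ℝ) < 2 * Real.pi := by positivity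
  have hwne : ∀ n : ℤ × ℤ, n ≠ 0 → ksq (wn L₁ L₂ n) ≠ 0 := by
    intro n hn
    have h1 : n.1 ≠ 0 ∨ n.2 ≠ 0 := by
      by_contra h
      push_neg at h
      exact hn (Prod.ext h.1 h.2)
    have hpos : 0 < ksq (wn L₁ L₂ n) := by
      rcases h1 with h | h
      · have h2 : (wn L₁ L₂ n).1 ≠ 0 := by
          simp only [wn]
          have : ((n.1 : ℝ)) ≠ 0 := Int.cast_ne_zero.mpr h
          positivity
        have := sq_abs (wn L₁ L₂ n).1 ▸ pow_pos (abs_pos.mpr h2) 2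
        simp only [ksq]
        nlinarith [sq_nonneg (wn L₁ L₂ n).2]
      · have h2 : (wn L₁ L₂ n).2 ≠ 0 := by
          simp only [wn]
          have : ((n.2 : ℝ)) ≠ 0 := Int.cast_ne_zero.mpr h
          positivity
        have := sq_abs (wn L₁ L₂ n).2 ▸ pow_pos (abs_pos.mpr h2) 2
        simp only [ksq]
        nlinarith [sq_nonneg (wn L₁ L₂ n).1]
    exact ne_of_gt hpos
  have hA : ksq (wn L₁ L₂ nj) ≠ 0 := hwne nj hj
  have hB : ksq (wn L₁ L₂ nk) ≠ 0 := hwne nk hk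
  -- first components sum to zero
  have hsum : (wn L₁ L₂ nj).1 + (wn L₁ L₂ nk).1 = 0 := by
    have : (wn L₁ L₂ nl).1 = (wn L₁ L₂ nj).1 + (wn L₁ L₂ nk).1 := by
      subst hjk
      simp only [wn, Prod.fst_add, Int.cast_add]
      ring
    rw [← this, hl1]
  set a := (wn L₁ L₂ nj) with ha
  set b := (wn L₁ L₂ nk) with hb
  have hb1 : b.1 = -a.1 := by linarith
  simp only [bco, hjk, hkj, if_pos rfl, if_true]
  simp only [Om] at hres
  by_cases h0 : a.1 = 0
  · have hb0 : b.1 = 0 := by rw [hb1, h0, neg_zero]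
    have hw : wedge a b = 0 := by simp [wedge, h0, hb0]
    have hw' : wedge b a = 0 := by simp [wedge, h0, hb0]
    rw [hw, hw']
    simp
  · -- resonance forces |a|² = |b|²
    have heq : ksq a = ksq b := by
      rw [← ha, ← hb] at hres
      rw [hb1] at hres
      field_simp at hres
      rcases mul_eq_zero.mp (show a.1 * (ksq a - ksq b) = 0 by linear_combination hres) with h | h
      · exact absurd h h0
      · linarith
    have hw : wedge b a = -wedge a b := by simp [wedge]; ring
    rw [← ha, ← hb]
    rw [hw, heq]
    field_simp
    ring
end
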